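/- For any set S of n points in general position in the plane and every integer m with 3 ≤ m ≤ n, Σ_{k=3}^{m} Σ_{ℓ=m−k}^{n−k} binom(ℓ, m−k) · X_{k,ℓ}(S) = binom(n, m). -/

import Mathlib

open Finset
open scoped Classical

def GenPos (S : Finset (ℝ × ℝ)) : Prop :=
  ∀ T ⊆ S, T.card = 3 → ¬ Collinear ℝ (T : Set (ℝ × ℝ))

def ConvexPos (T : Finset (ℝ × ℝ)) : Prop :=
  ∀ p ∈ T, p ∉ convexHull ℝ ((T : Set (ℝ × ℝ)) \ {p})

/-- number of convex k-gons with vertices in S and exactly l points of S inside -/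
noncomputable def X (S : Finset (ℝ × ℝ)) (k l : ℕ) : ℕ :=
  ((Finset.powersetCard k S).filter (fun T => ConvexPos T ∧
    (S.filter (fun p => p ∈ interior (convexHull ℝ (T : Set (ℝ × ℝ))))).card = l)).card

/-- number of extreme points (convex hull vertices) of S -/
noncomputable def hullVerts (S : Finset (ℝ × ℝ)) : ℕ :=
  (S.filter (fun p => p ∉ convexHull ℝ ((S : Set (ℝ × ℝ)) \ {p}))).card

namespace Stmt7Aux

abbrev Pt := ℝ × ℝ

/-- the finset of extreme points of (the hull of) a finset -/
noncomputable def extF (M : Finset Pt) : Finset Pt :=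
  M.filter (fun p => p ∉ convexHull ℝ ((M : Set Pt) \ {p}))

lemma extF_subset (M : Finset Pt) : extF M ⊆ M := Finset.filter_subset _ _

lemma exists_ne_zero {f : Pt →L[ℝ] ℝ} (hf : f ≠ 0) : ∃ v, f v ≠ 0 := by
  by_contra h
  push_neg at h
  exact hf (ContinuousLinearMap.ext fun v => by simp [h v])

lemma hull_le_of_forall_le {A : Set Pt} (f : Pt →L[ℝ] ℝ) {c : ℝ} (h : ∀ a ∈ A, f a ≤ c) :
    ∀ z ∈ convexHull ℝ A, f z ≤ c := fun _ hz =>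
  convexHull_min h (convex_halfSpace_le ⟨map_add f, map_smul f⟩ c) hz

lemma interior_lt {f : Pt →L[ℝ] ℝ} (hf : f ≠ 0) {s : Set Pt} {a : Pt} {c : ℝ}
    (ha : a ∈ interior s) (hs : ∀ z ∈ s, f z ≤ c) : f a < c := by
  obtain ⟨v, hv⟩ := exists_ne_zero hf
  set v' : Pt := (f v)⁻¹ • v with hv'def
  have hfv' : f v' = 1 := by
    simp [hv'def, map_smul, inv_mul_cancel₀ hv]
  have hv'ne : v' ≠ 0 := by
    intro h
    rw [h] at hfv'
    simp at hfv'
  obtain ⟨ε, hε0, hball⟩ := Metric.isOpen_iff.1 isOpen_interior a ha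
  set t : ℝ := ε / (2 * ‖v'‖) with htdef
  have hnv : 0 < ‖v'‖ := norm_pos_iff.2 hv'ne
  have ht0 : 0 < t := by positivity
  have hw : a + t • v' ∈ Metric.ball a ε := by
    rw [Metric.mem_ball, dist_eq_norm]
    have : a + t • v' - a = t • v' := by abel
    rw [this, norm_smul, Real.norm_eq_abs, abs_of_pos ht0, htdef]
    rw [div_mul_eq_mul_div, mul_comm]
    rw [div_lt_iff₀ (by positivity)]
    nlinarith
  have hws : a + t • v' ∈ s := interior_subset (hball hw)
  have := hs _ hws
  rw [map_add, map_smul, hfv', smul_eq_mul, mul_one] at this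
  linarith

lemma face_lemma (A : Finset Pt) (f : Pt →L[ℝ] ℝ) (c : ℝ) (hA : ∀ a ∈ A, f a ≤ c) {z : Pt}
    (hz : z ∈ convexHull ℝ (A : Set Pt)) (hzc : f z = c) :
    z ∈ convexHull ℝ ((A.filter fun a => f a = c : Finset Pt) : Set Pt) := by
  rw [Finset.convexHull_eq] at hz ⊢
  obtain ⟨w, hw0, hw1, hwz⟩ := hz
  have hzsum : z = ∑ y ∈ A, w y • y := by
    rw [← hwz, Finset.centerMass_eq_of_sum_1 _ _ hw1]
    simp
  have hfz : ∑ y ∈ A, w y * (c - f y) = 0 := by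
    have h1 : f z = ∑ y ∈ A, w y * f y := by
      rw [hzsum, map_sum]
      simp [smul_eq_mul]
    have h2 : ∑ y ∈ A, w y * (c - f y) = (∑ y ∈ A, w y) * c - ∑ y ∈ A, w y * f y := by
      rw [Finset.sum_mul, ← Finset.sum_sub_distrib]
      congr 1
      ext y
      ring
    rw [h2, hw1, ← h1, hzc]
    ring
  have hkey : ∀ y ∈ A, w y * (c - f y) = 0 :=
    (Finset.sum_eq_zero_iff_of_nonneg (fun y hy =>
      mul_nonneg (hw0 y hy) (sub_nonneg.2 (hA y hy)))).1 hfz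
  have hzero : ∀ y ∈ A, y ∉ A.filter (fun a => f a = c) → w y = 0 := by
    intro y hy hyf
    have hne : f y ≠ c := by
      intro h
      exact hyf (Finset.mem_filter.2 ⟨hy, h⟩)
    rcases mul_eq_zero.1 (hkey y hy) with h | h
    · exact h
    · exact absurd (by linarith [sub_eq_zero.1 h] : f y = c) hne
  have hsum1 : ∑ y ∈ A.filter (fun a => f a = c), w y = 1 := by
    rw [← hw1]
    exact Finset.sum_subset (Finset.filter_subset _ _) hzero
  refine ⟨w, fun y hy => hw0 y (Finset.filter_subset _ _ hy), hsum1, ?_⟩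
  rw [Finset.centerMass_eq_of_sum_1 _ _ hsum1]
  simp only [id]
  rw [hzsum]
  exact Finset.sum_subset (Finset.filter_subset _ _)
    (fun y hy hyn => by rw [hzero y hy hyn, zero_smul])

lemma notin_hull_union (T B : Finset Pt) {p : Pt} (hpT : p ∈ T)
    (hne : (T.erase p).Nonempty)
    (hp : p ∉ convexHull ℝ ((T : Set Pt) \ {p}))
    (hB : ∀ b ∈ B, b ∈ interior (convexHull ℝ (T : Set Pt))) :
    p ∉ convexHull ℝ ((T.erase p ∪ B : Finset Pt) : Set Pt) := by
  have hfin : ((T : Set Pt) \ {p}).Finite := T.finite_toSet.diff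
  obtain ⟨f, u, hfu, hup⟩ := geometric_hahn_banach_closed_point
    (convex_convexHull ℝ _) (hfin.isClosed_convexHull ℝ) hp
  obtain ⟨q, hq⟩ := hne
  have hq' : (q : Pt) ∈ convexHull ℝ ((T : Set Pt) \ {p}) :=
    subset_convexHull ℝ _ ⟨Finset.mem_coe.2 (Finset.mem_of_mem_erase hq),
      by simp [Finset.ne_of_mem_erase hq]⟩
  have hf0 : f ≠ 0 := by
    intro h
    have h1 := hfu q hq'
    rw [h] at h1 hup
    simp at h1 hup
    linarith
  have hTle : ∀ a ∈ (T : Set Pt), f a ≤ f p := by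
    intro a ha
    by_cases hap : a = p
    · exact le_of_eq (by rw [hap])
    · exact le_of_lt (lt_trans (hfu a (subset_convexHull ℝ _ ⟨ha, by simp [hap]⟩)) hup)
  have hhull : ∀ z ∈ convexHull ℝ (T : Set Pt), f z ≤ f p := hull_le_of_forall_le f hTle
  have hlt : ∀ a ∈ T.erase p ∪ B, f a < f p := by
    intro a ha
    rcases Finset.mem_union.1 ha with h | h
    · exact lt_trans (hfu a (subset_convexHull ℝ _
        ⟨Finset.mem_coe.2 (Finset.mem_of_mem_erase h),
          by simp [Finset.ne_of_mem_erase h]⟩)) hup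
    · exact interior_lt hf0 (hB a h) hhull
  have hAne : (T.erase p ∪ B).Nonempty := ⟨q, Finset.mem_union.2 (Or.inl hq)⟩
  set c := ((T.erase p ∪ B).image f).max' (hAne.image f) with hcdef
  have hc : ∀ a ∈ T.erase p ∪ B, f a ≤ c := fun a ha =>
    Finset.le_max' _ _ (Finset.mem_image_of_mem f ha)
  obtain ⟨a₀, ha₀, hfa₀⟩ := Finset.mem_image.1 (((T.erase p ∪ B).image f).max'_mem (hAne.image f))
  have hclt : c < f p := by rw [← hcdef] at hfa₀; rw [← hfa₀]; exact hlt a₀ ha₀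
  intro hmem
  have := hull_le_of_forall_le f (fun a ha => hc a (Finset.mem_coe.1 ha)) p hmem
  linarith

lemma vertex_not_interior (T : Finset Pt) {p : Pt} (hpT : p ∈ T)
    (hne : (T.erase p).Nonempty)
    (hp : p ∉ convexHull ℝ ((T : Set Pt) \ {p})) :
    p ∉ interior (convexHull ℝ (T : Set Pt)) := by
  intro hint
  have := notin_hull_union T {p} hpT hne hp (by simpa using hint)
  apply this
  apply subset_convexHull
  simp

lemma collinear_level {f : Pt →L[ℝ] ℝ} (hf0 : f ≠ 0) {x a b : Pt}
    (ha : f a = f x) (hb : f b = f x) : Collinear ℝ ({x, a, b} : Set Pt) := by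
  have hker : vectorSpan ℝ ({x, a, b} : Set Pt) ≤ LinearMap.ker (f : Pt →ₗ[ℝ] ℝ) := by
    rw [vectorSpan_def, Submodule.span_le]
    rintro v ⟨p, hp, q, hq, rfl⟩
    have hfp : (f : Pt →ₗ[ℝ] ℝ) p = f x := by
      rcases hp with rfl | rfl | rfl <;> simp [ha, hb]
    have hfq : (f : Pt →ₗ[ℝ] ℝ) q = f x := by
      rcases hq with rfl | rfl | rfl <;> simp [ha, hb]
    simp only [SetLike.mem_coe, LinearMap.mem_ker, vsub_eq_sub, map_sub, hfp, hfq, sub_self]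
  have hrange : LinearMap.range (f : Pt →ₗ[ℝ] ℝ) = ⊤ := by
    obtain ⟨v, hv⟩ := exists_ne_zero hf0
    rw [LinearMap.range_eq_top]
    intro c
    exact ⟨(c / f v) • v, by simp [smul_eq_mul]; field_simp⟩
  have hkerfr : Module.finrank ℝ (LinearMap.ker (f : Pt →ₗ[ℝ] ℝ)) = 1 := by
    have h1 := LinearMap.finrank_range_add_finrank_ker (f : Pt →ₗ[ℝ] ℝ)
    rw [hrange] at h1
    have h2 : Module.finrank ℝ (⊤ : Submodule ℝ ℝ) = 1 := by simp
    have h3 : Module.finrank ℝ Pt = 2 := by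
      simp [Module.finrank_prod]
    omega
  have hfr : Module.finrank ℝ (vectorSpan ℝ ({x, a, b} : Set Pt)) ≤ 1 := by
    rw [← hkerfr]
    exact Submodule.finrank_mono hker
  exact collinear_iff_finrank_le_one.2 hfr

lemma not_collinear_coe (S T : Finset Pt) (hgp : GenPos S) (hTS : T ⊆ S) (h3 : 3 ≤ T.card) :
    ¬ Collinear ℝ (T : Set Pt) := by
  obtain ⟨u, huT, hu3⟩ := Finset.exists_subset_card_eq h3
  exact fun hc => hgp u (huT.trans hTS) hu3 (hc.subset (Finset.coe_subset.2 huT))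

lemma genpos_triple (S : Finset Pt) (hgp : GenPos S) {a b c : Pt}
    (ha : a ∈ S) (hb : b ∈ S) (hc : c ∈ S)
    (hab : a ≠ b) (hac : a ≠ c) (hbc : b ≠ c) : ¬ Collinear ℝ ({a, b, c} : Set Pt) := by
  intro h
  refine hgp {a, b, c} ?_ ?_ (by simpa using h)
  · intro x hx
    simp only [Finset.mem_insert, Finset.mem_singleton] at hx
    rcases hx with rfl | rfl | rfl <;> assumption
  · rw [Finset.card_insert_of_notMem (by simp [hab, hac]),
      Finset.card_insert_of_notMem (by simp [hbc]), Finset.card_singleton]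

lemma interior_hull_nonempty (S T : Finset Pt) (hgp : GenPos S) (hTS : T ⊆ S)
    (h3 : 3 ≤ T.card) : (interior (convexHull ℝ (T : Set Pt))).Nonempty := by
  rw [interior_convexHull_nonempty_iff_affineSpan_eq_top]
  have hne : (T : Set Pt).Nonempty := by
    rw [Finset.coe_nonempty, ← Finset.card_pos]
    omega
  rw [AffineSubspace.affineSpan_eq_top_iff_vectorSpan_eq_top_of_nonempty ℝ Pt Pt hne]
  have h1 : ¬ (Module.finrank ℝ (vectorSpan ℝ (T : Set Pt)) ≤ 1) := fun h =>
    not_collinear_coe S T hgp hTS h3 (collinear_iff_finrank_le_one.2 h)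
  have h2 : Module.finrank ℝ (vectorSpan ℝ (T : Set Pt)) ≤ 2 := by
    have := Submodule.finrank_le (vectorSpan ℝ (T : Set Pt))
    simpa [Module.finrank_prod] using this
  have h4 : 2 ≤ Module.finrank ℝ (vectorSpan ℝ (T : Set Pt)) := by
    by_contra hlt
    push_neg at hlt
    exact h1 (by omega)
  apply Submodule.eq_top_of_finrank_eq
  rw [le_antisymm h2 h4, Module.finrank_prod, Module.finrank_self]

lemma mem_interior_hull (S T : Finset Pt) (hgp : GenPos S) (hTS : T ⊆ S) (h3 : 3 ≤ T.card)
    {x : Pt} (hxS : x ∈ S) (hxT : x ∉ T) (hx : x ∈ convexHull ℝ (T : Set Pt)) :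
    x ∈ interior (convexHull ℝ (T : Set Pt)) := by
  by_contra hxi
  obtain ⟨a₀, ha₀⟩ := interior_hull_nonempty S T hgp hTS h3
  obtain ⟨f, hfl⟩ := geometric_hahn_banach_open_point
    ((convex_convexHull ℝ _).interior) isOpen_interior hxi
  have hf0 : f ≠ 0 := by
    intro h
    have := hfl a₀ ha₀
    rw [h] at this
    simp at this
  have hle : ∀ z ∈ convexHull ℝ (T : Set Pt), f z ≤ f x := by
    intro z hz
    by_contra hcon
    push_neg at hcon
    set t : ℝ := (f z - f x) / (2 * (f z - f a₀)) with htdef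
    have ha₀x : f a₀ < f x := hfl a₀ ha₀
    have hd : 0 < f z - f a₀ := by linarith
    have ht0 : 0 < t := div_pos (by linarith) (by linarith)
    have ht1 : t ≤ 1 := by
      rw [htdef, div_le_one (by linarith)]
      nlinarith
    have hcomb : t • a₀ + (1 - t) • z ∈ interior (convexHull ℝ (T : Set Pt)) :=
      (convex_convexHull ℝ _).combo_interior_self_mem_interior ha₀ hz ht0
        (by linarith) (by ring)
    have := hfl _ hcomb
    rw [map_add, map_smul, map_smul, smul_eq_mul, smul_eq_mul] at this
    have hteq : t * (f z - f a₀) = (f z - f x) / 2 := by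
      rw [htdef]
      field_simp
    nlinarith
  have hface : x ∈ convexHull ℝ ((T.filter fun a => f a = f x : Finset Pt) : Set Pt) :=
    face_lemma T f (f x) (fun a ha => hle a (subset_convexHull ℝ _ ha)) hx rfl
  set F := T.filter (fun a => f a = f x) with hFdef
  by_cases hF2 : 2 ≤ F.card
  · obtain ⟨a, haF, b, hbF, hab⟩ := Finset.one_lt_card.1 (show 1 < F.card by omega)
    have haT := Finset.mem_filter.1 haF
    have hbT := Finset.mem_filter.1 hbF
    exact genpos_triple S hgp hxS (hTS haT.1) (hTS hbT.1)
      (fun h => hxT (h ▸ haT.1)) (fun h => hxT (h ▸ hbT.1)) hab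
      (collinear_level hf0 haT.2 hbT.2)
  · have hFne : F.Nonempty := by
      by_contra h
      rw [Finset.not_nonempty_iff_eq_empty] at h
      rw [h] at hface
      simp at hface
    obtain ⟨a, haF⟩ := hFne
    have hsub : (F : Set Pt) ⊆ {a} := by
      intro y hy
      have hy' := Finset.mem_coe.1 hy
      have : F.card ≤ 1 := by omega
      have := Finset.card_le_one.1 this y hy' a haF
      simp [this]
    have : x ∈ convexHull ℝ ({a} : Set Pt) := convexHull_mono hsub hface
    rw [convexHull_singleton] at this
    rw [Set.mem_singleton_iff] at this
    exact hxT (this ▸ (Finset.mem_filter.1 haF).1)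

lemma hull_extF (M : Finset Pt) :
    convexHull ℝ ((extF M : Finset Pt) : Set Pt) = convexHull ℝ (M : Set Pt) := by
  refine Set.Subset.antisymm (convexHull_mono (Finset.coe_subset.2 (extF_subset M))) ?_
  have hcomp : IsCompact (convexHull ℝ (M : Set Pt)) := M.finite_toSet.isCompact_convexHull ℝ
  have hKM := closure_convexHull_extremePoints hcomp (convex_convexHull ℝ _)
  have hsub : (convexHull ℝ (M : Set Pt)).extremePoints ℝ ⊆ (extF M : Set Pt) := by
    intro p hp
    have hpM : p ∈ M := Finset.mem_coe.1 (extremePoints_convexHull_subset hp)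
    refine Finset.mem_coe.2 (Finset.mem_filter.2 ⟨hpM, fun hcon => ?_⟩)
    have h1 : convexHull ℝ ((M : Set Pt) \ {p}) ⊆ convexHull ℝ (M : Set Pt) :=
      convexHull_mono Set.diff_subset
    have h2 : p ∈ (convexHull ℝ ((M : Set Pt) \ {p})).extremePoints ℝ :=
      inter_extremePoints_subset_extremePoints_of_subset h1 ⟨hcon, hp⟩
    exact (extremePoints_convexHull_subset h2).2 rfl
  calc convexHull ℝ (M : Set Pt)
      = closure (convexHull ℝ ((convexHull ℝ (M : Set Pt)).extremePoints ℝ)) := hKM.symm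
    _ ⊆ closure (convexHull ℝ ((extF M : Finset Pt) : Set Pt)) :=
        closure_mono (convexHull_mono hsub)
    _ = convexHull ℝ ((extF M : Finset Pt) : Set Pt) :=
        ((extF M).finite_toSet.isClosed_convexHull ℝ).closure_eq

lemma extF_card_ge (S M : Finset Pt) (hgp : GenPos S) (hMS : M ⊆ S) (h3 : 3 ≤ M.card) :
    3 ≤ (extF M).card := by
  by_contra h
  push_neg at h
  have hcard : (extF M).card ≤ 2 := by omega
  obtain ⟨a, b, hab⟩ : ∃ a b : Pt, ((extF M : Finset Pt) : Set Pt) ⊆ {a, b} := by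
    rcases Nat.lt_or_ge (extF M).card 1 with h1 | h1
    · have : extF M = ∅ := Finset.card_eq_zero.1 (show (extF M).card = 0 by omega)
      exact ⟨0, 0, by simp [this]⟩
    rcases Nat.lt_or_ge (extF M).card 2 with h2 | h2
    · obtain ⟨a, ha⟩ := Finset.card_eq_one.1 (show (extF M).card = 1 by omega)
      exact ⟨a, a, by simp [ha]⟩
    · obtain ⟨a, b, _, hab⟩ := Finset.card_eq_two.1 (show (extF M).card = 2 by omega)
      exact ⟨a, b, by simp [hab]⟩
  have hMsub : (M : Set Pt) ⊆ segment ℝ a b := by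
    intro z hz
    have h1 : z ∈ convexHull ℝ (M : Set Pt) := subset_convexHull ℝ _ hz
    rw [← hull_extF] at h1
    have h2 := convexHull_mono hab h1
    rwa [convexHull_pair] at h2
  have hcol : Collinear ℝ (M : Set Pt) := by
    refine (collinear_iff_exists_forall_eq_smul_vadd (M : Set Pt)).2 ⟨b, a - b, fun p hp => ?_⟩
    obtain ⟨θ, μ, hθ, hμ, hθμ, rfl⟩ := hMsub hp
    refine ⟨θ, ?_⟩
    have hμ' : μ = 1 - θ := by linarith
    rw [hμ']
    simp only [vadd_eq_add, smul_sub]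
    module
  exact not_collinear_coe S M hgp hMS h3 hcol

lemma convexPos_extF (M : Finset Pt) : ConvexPos (extF M) := by
  intro p hp
  have h2 := (Finset.mem_filter.1 hp).2
  intro hcon
  exact h2 (convexHull_mono (Set.diff_subset_diff_left
    (Finset.coe_subset.2 (extF_subset M))) hcon)

end Stmt7Aux

open Stmt7Aux

theorem stmt7 (S : Finset (ℝ × ℝ)) (hgp : GenPos S) (m : ℕ)
    (hm : 3 ≤ m) (hmn : m ≤ S.card) :
    ∑ k ∈ Finset.Icc 3 m, ∑ l ∈ Finset.Icc (m - k) (S.card - k),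
      l.choose (m - k) * X S k l = S.card.choose m := by
  classical
  set n := S.card with hn
  set cnt : Finset Pt → ℕ :=
    fun T => (S.filter (fun p => p ∈ interior (convexHull ℝ (T : Set Pt)))).card with hcnt
  set 𝒯 : Finset (Finset Pt) :=
    S.powerset.filter (fun T => ConvexPos T ∧ 3 ≤ T.card ∧ T.card ≤ m) with h𝒯
  -- interior points are disjoint from T, for T ∈ 𝒯
  have hdisj : ∀ T ∈ 𝒯, ∀ p ∈ T,
      p ∉ interior (convexHull ℝ (T : Set Pt)) := by
    intro T hT p hpT
    have hT2 := Finset.mem_filter.1 hT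
    have hTS : T ⊆ S := Finset.mem_powerset.1 hT2.1
    obtain ⟨hcp, h3, hkm⟩ := hT2.2
    have hne : (T.erase p).Nonempty := by
      rw [← Finset.card_pos, Finset.card_erase_of_mem hpT]
      omega
    exact vertex_not_interior T hpT hne (hcp p hpT)
  -- fiber characterization
  have hfiber : ∀ T ∈ 𝒯, ∀ M ∈ Finset.powersetCard m S,
      (extF M = T ↔ T ⊆ M ∧ ∀ p ∈ M, p ∉ T → p ∈ interior (convexHull ℝ (T : Set Pt))) := by
    intro T hT M hM
    obtain ⟨hMS, hMc⟩ := Finset.mem_powersetCard.1 hM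
    have hT2 := Finset.mem_filter.1 hT
    have hTS : T ⊆ S := Finset.mem_powerset.1 hT2.1
    obtain ⟨hcp, h3, hkm⟩ := hT2.2
    constructor
    · rintro rfl
      refine ⟨extF_subset M, fun p hpM hpT => ?_⟩
      have hpS : p ∈ S := hMS hpM
      have hphull : p ∈ convexHull ℝ ((extF M : Finset Pt) : Set Pt) := by
        rw [hull_extF]
        exact subset_convexHull ℝ _ hpM
      exact mem_interior_hull S (extF M) hgp ((extF_subset M).trans hMS) h3 hpS hpT hphull
    · rintro ⟨hTM, hint⟩
      apply Finset.ext
      intro p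
      constructor
      · intro hp
        have hpM := (Finset.mem_filter.1 hp).1
        by_contra hpT
        have hpint := hint p hpM hpT
        have h1 : (T : Set Pt) ⊆ (M : Set Pt) \ {p} := by
          intro y hy
          exact ⟨hTM hy, by simp; rintro rfl; exact hpT hy⟩
        have h2 : p ∈ convexHull ℝ ((M : Set Pt) \ {p}) :=
          convexHull_mono h1 (interior_subset hpint)
        exact (Finset.mem_filter.1 hp).2 h2
      · intro hpT
        have hpM : p ∈ M := hTM hpT
        refine Finset.mem_filter.2 ⟨hpM, ?_⟩
        have hne : (T.erase p).Nonempty := by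
          rw [← Finset.card_pos, Finset.card_erase_of_mem hpT]
          omega
        have hnot := notin_hull_union T (M \ T) hpT hne (hcp p hpT)
          (fun b hb => hint b (Finset.mem_sdiff.1 hb).1 (Finset.mem_sdiff.1 hb).2)
        have hset : (M : Set Pt) \ {p} = ((T.erase p ∪ (M \ T) : Finset Pt) : Set Pt) := by
          rw [Finset.coe_union, Finset.coe_erase, Finset.coe_sdiff]
          ext y
          simp only [Set.mem_diff, Set.mem_union, Set.mem_singleton_iff, Finset.mem_coe]
          constructor
          · rintro ⟨hyM, hyp⟩
            by_cases hyT : y ∈ T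
            · exact Or.inl ⟨hyT, hyp⟩
            · exact Or.inr ⟨hyM, hyT⟩
          · rintro (⟨hyT, hyp⟩ | ⟨hyM, hyT⟩)
            · exact ⟨hTM hyT, hyp⟩
            · refine ⟨hyM, ?_⟩
              rintro rfl
              exact hyT hpT
        rw [hset]
        exact hnot
  -- fiber size
  have hfibercard : ∀ T ∈ 𝒯,
      ((Finset.powersetCard m S).filter (fun M => extF M = T)).card
        = (cnt T).choose (m - T.card) := by
    intro T hT
    have hT2 := Finset.mem_filter.1 hT
    have hTS : T ⊆ S := Finset.mem_powerset.1 hT2.1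
    obtain ⟨hcp, h3, hkm⟩ := hT2.2
    set I := S.filter (fun p => p ∈ interior (convexHull ℝ (T : Set Pt))) with hIdef
    have hTI : Disjoint T I := by
      rw [Finset.disjoint_left]
      intro p hpT hpI
      exact hdisj T hT p hpT (Finset.mem_filter.1 hpI).2
    have hcntI : cnt T = I.card := rfl
    rw [hcntI, ← Finset.card_powersetCard]
    apply Finset.card_bij' (fun M _ => M \ T) (fun L _ => T ∪ L)
    · -- maps to
      intro M hM
      have hM' := Finset.mem_filter.1 hM
      have hMP := hM'.1
      obtain ⟨hMS, hMc⟩ := Finset.mem_powersetCard.1 hMP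
      obtain ⟨hTM, hint⟩ := (hfiber T hT M hMP).1 hM'.2
      refine Finset.mem_powersetCard.2 ⟨?_, ?_⟩
      · intro p hp
        obtain ⟨hpM, hpT⟩ := Finset.mem_sdiff.1 hp
        exact Finset.mem_filter.2 ⟨hMS hpM, hint p hpM hpT⟩
      · rw [Finset.card_sdiff_of_subset hTM, hMc]
    · -- maps back
      intro L hL
      obtain ⟨hLI, hLc⟩ := Finset.mem_powersetCard.1 hL
      have hTL : Disjoint T L := hTI.mono_right hLI
      have hmem : T ∪ L ∈ Finset.powersetCard m S := by
        refine Finset.mem_powersetCard.2 ⟨?_, ?_⟩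
        · intro p hp
          rcases Finset.mem_union.1 hp with h | h
          · exact hTS h
          · exact (Finset.filter_subset _ _) (hLI h)
        · rw [Finset.card_union_of_disjoint hTL, hLc]
          omega
      refine Finset.mem_filter.2 ⟨hmem, ?_⟩
      rw [hfiber T hT (T ∪ L) hmem]
      refine ⟨Finset.subset_union_left, fun p hp hpT => ?_⟩
      rcases Finset.mem_union.1 hp with h | h
      · exact absurd h hpT
      · exact (Finset.mem_filter.1 (hLI h)).2
    · -- left inverse
      intro M hM
      have hM' := Finset.mem_filter.1 hM
      obtain ⟨hTM, _⟩ := (hfiber T hT M hM'.1).1 hM'.2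
      exact Finset.union_sdiff_of_subset hTM
    · -- right inverse
      intro L hL
      obtain ⟨hLI, _⟩ := Finset.mem_powersetCard.1 hL
      have hTL : Disjoint T L := hTI.mono_right hLI
      exact Finset.union_sdiff_cancel_left hTL
  -- total count
  have hcount : ∑ T ∈ 𝒯, (cnt T).choose (m - T.card) = n.choose m := by
    have hpc : (Finset.powersetCard m S).card = n.choose m := Finset.card_powersetCard m S
    rw [← hpc]
    rw [Finset.card_eq_sum_card_fiberwise (f := extF) (t := 𝒯) ?_]
    · exact (Finset.sum_congr rfl (fun T hT => (hfibercard T hT))).symm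
    · intro M hM
      obtain ⟨hMS, hMc⟩ := Finset.mem_powersetCard.1 hM
      refine Finset.mem_filter.2 ⟨Finset.mem_powerset.2 ((extF_subset M).trans hMS), ?_, ?_, ?_⟩
      · exact convexPos_extF M
      · exact extF_card_ge S M hgp hMS (by omega)
      · calc (extF M).card ≤ M.card := Finset.card_le_card (extF_subset M)
          _ = m := hMc
  -- now rewrite LHS
  set 𝒯' : Finset (Finset Pt) := 𝒯.filter (fun T => m - T.card ≤ cnt T) with h𝒯'
  have hsum𝒯' : ∑ T ∈ 𝒯', (cnt T).choose (m - T.card)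
      = ∑ T ∈ 𝒯, (cnt T).choose (m - T.card) := by
    apply Finset.sum_subset (Finset.filter_subset _ _)
    intro T hT hT'
    have : cnt T < m - T.card := by
      by_contra h
      exact hT' (Finset.mem_filter.2 ⟨hT, by omega⟩)
    exact Nat.choose_eq_zero_of_lt this
  have hcntub : ∀ T ∈ 𝒯, cnt T ≤ n - T.card := by
    intro T hT
    have hT2 := Finset.mem_filter.1 hT
    have hTS : T ⊆ S := Finset.mem_powerset.1 hT2.1
    obtain ⟨hcp, h3, hkm⟩ := hT2.2
    have hsub : S.filter (fun p => p ∈ interior (convexHull ℝ (T : Set Pt))) ⊆ S \ T := by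
      intro p hp
      have hp' := Finset.mem_filter.1 hp
      refine Finset.mem_sdiff.2 ⟨hp'.1, fun hpT => hdisj T hT p hpT hp'.2⟩
    calc cnt T ≤ (S \ T).card := Finset.card_le_card hsub
      _ = n - T.card := by rw [Finset.card_sdiff_of_subset hTS]
  have hstep1 : ∑ T ∈ 𝒯', (cnt T).choose (m - T.card)
      = ∑ k ∈ Finset.Icc 3 m, ∑ T ∈ 𝒯'.filter (fun T => T.card = k),
          (cnt T).choose (m - T.card) := by
    symm
    apply Finset.sum_fiberwise_of_maps_to
    intro T hT
    have hT𝒯 := Finset.mem_filter.1 hT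
    have := Finset.mem_filter.1 hT𝒯.1
    rw [Finset.mem_Icc]
    exact ⟨this.2.2.1, this.2.2.2⟩
  have hstep2 : ∀ k ∈ Finset.Icc 3 m,
      ∑ T ∈ 𝒯'.filter (fun T => T.card = k), (cnt T).choose (m - T.card)
        = ∑ l ∈ Finset.Icc (m - k) (n - k),
            ∑ T ∈ (𝒯'.filter (fun T => T.card = k)).filter (fun T => cnt T = l),
              (cnt T).choose (m - T.card) := by
    intro k hk
    symm
    apply Finset.sum_fiberwise_of_maps_to
    intro T hT
    have h1 := Finset.mem_filter.1 hT
    have h2 := Finset.mem_filter.1 h1.1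
    rw [Finset.mem_Icc]
    constructor
    · rw [← h1.2]
      exact h2.2
    · rw [← h1.2]
      exact hcntub T h2.1
  have hinner : ∀ k ∈ Finset.Icc 3 m, ∀ l ∈ Finset.Icc (m - k) (n - k),
      ∑ T ∈ (𝒯'.filter (fun T => T.card = k)).filter (fun T => cnt T = l),
          (cnt T).choose (m - T.card) = l.choose (m - k) * X S k l := by
    intro k hk l hl
    rw [Finset.mem_Icc] at hk hl
    have hXeq : (𝒯'.filter (fun T => T.card = k)).filter (fun T => cnt T = l)
        = (Finset.powersetCard k S).filter (fun T => ConvexPos T ∧ cnt T = l) := by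
      apply Finset.ext
      intro T
      simp only [Finset.mem_filter, Finset.mem_powerset, Finset.mem_powersetCard, h𝒯', h𝒯]
      constructor
      · rintro ⟨⟨⟨⟨hTS, hcp, h3, hkm⟩, hml⟩, hck⟩, hcl⟩
        exact ⟨⟨hTS, hck⟩, hcp, hcl⟩
      · rintro ⟨⟨hTS, hck⟩, hcp, hcl⟩
        exact ⟨⟨⟨⟨hTS, hcp, by omega, by omega⟩, by omega⟩, hck⟩, hcl⟩
    rw [hXeq]
    have hconst : ∀ T ∈ (Finset.powersetCard k S).filter (fun T => ConvexPos T ∧ cnt T = l),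
        (cnt T).choose (m - T.card) = l.choose (m - k) := by
      intro T hT
      have h1 := Finset.mem_filter.1 hT
      have h2 := (Finset.mem_powersetCard.1 h1.1).2
      rw [h1.2.2, h2]
    rw [Finset.sum_congr rfl hconst, Finset.sum_const, smul_eq_mul, mul_comm]
    congr 1
  calc ∑ k ∈ Finset.Icc 3 m, ∑ l ∈ Finset.Icc (m - k) (n - k), l.choose (m - k) * X S k l
      = ∑ k ∈ Finset.Icc 3 m, ∑ l ∈ Finset.Icc (m - k) (n - k),
          ∑ T ∈ (𝒯'.filter (fun T => T.card = k)).filter (fun T => cnt T = l),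
            (cnt T).choose (m - T.card) := by
        refine Finset.sum_congr rfl (fun k hk => Finset.sum_congr rfl (fun l hl => ?_))
        exact (hinner k hk l hl).symm
    _ = ∑ k ∈ Finset.Icc 3 m, ∑ T ∈ 𝒯'.filter (fun T => T.card = k),
          (cnt T).choose (m - T.card) := by
        exact Finset.sum_congr rfl (fun k hk => (hstep2 k hk).symm)
    _ = ∑ T ∈ 𝒯', (cnt T).choose (m - T.card) := hstep1.symm
    _ = ∑ T ∈ 𝒯, (cnt T).choose (m - T.card) := hsum𝒯'
    _ = n.choose m := hcount
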